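/- arXiv:1305.7499 — 2 statements merged into one kernel-verified Lean document; each statement's English description precedes it below -/
import Mathlib

section
/- Let N ≥ 1, and let u : B̄₁(0) × [−1, 0] → ℝ be continuous, C² in x and C¹ in t on B₁(0) × (−1, 0], satisfying u_t − Δu ≥ 1 in B₁(0) × (−1, 0] and u ≥ 0 on the parabolic boundary (B₁(0) × {t = −1}) ∪ (∂B₁(0) × [−1, 0)). Then for every x with |x| ≤ κ < 1, u(x, 0) ≥ (1 − κ²)/(1 + 4N). -/
open Metric Set Filter
open scoped RealInnerProductSpace

/-- Second derivative test: at an interior local min, second derivative is nonneg. -/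
lemma hgl_sdt {f : ℝ → ℝ} {c : ℝ}
    (hf : ∀ᶠ s in nhds (0:ℝ), DifferentiableAt ℝ f s)
    (hf' : HasDerivAt (deriv f) c 0) (hmin : IsLocalMin f 0) : 0 ≤ c := by
  by_contra hc
  push_neg at hc
  have h0 : deriv f 0 = 0 := hmin.deriv_eq_zero
  have hslope : Tendsto (slope (deriv f) 0) (nhdsWithin 0 {(0:ℝ)}ᶜ) (nhds c) :=
    hasDerivAt_iff_tendsto_slope.1 hf'
  have hev : ∀ᶠ s in nhdsWithin 0 {(0:ℝ)}ᶜ, slope (deriv f) 0 s < 0 :=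
    hslope.eventually_lt_const hc
  have hev2 : ∀ᶠ s in nhds (0:ℝ), s ≠ 0 → slope (deriv f) 0 s < 0 :=
    eventually_nhdsWithin_iff.1 hev
  have hall : ∀ᶠ s in nhds (0:ℝ),
      (s ≠ 0 → slope (deriv f) 0 s < 0) ∧ DifferentiableAt ℝ f s ∧ f 0 ≤ f s :=
    hev2.and (hf.and hmin)
  rcases Metric.eventually_nhds_iff.1 hall with ⟨ε, hε, hP⟩
  set s₀ := ε / 2 with hs₀
  have hs₀pos : 0 < s₀ := by positivity
  have hmemball : ∀ s ∈ Icc (0:ℝ) s₀, dist s 0 < ε := by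
    intro s hs
    rw [Real.dist_eq, sub_zero, abs_of_nonneg hs.1]
    have := hs.2
    linarith
  have hanti : StrictAntiOn f (Icc 0 s₀) := by
    apply strictAntiOn_of_deriv_neg (convex_Icc 0 s₀)
    · intro s hs
      exact ((hP (hmemball s hs)).2.1).continuousAt.continuousWithinAt
    · intro s hs
      rw [interior_Icc] at hs
      have hd := hmemball s ⟨le_of_lt hs.1, le_of_lt hs.2⟩
      have hsl := (hP hd).1 (ne_of_gt hs.1)
      rw [slope_def_field, h0, sub_zero, sub_zero, div_neg_iff] at hsl
      rcases hsl with ⟨h1, h2⟩ | ⟨h1, h2⟩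
      · linarith [hs.1]
      · exact h1
  have h1 : f s₀ < f 0 := hanti ⟨le_refl 0, le_of_lt hs₀pos⟩ ⟨le_of_lt hs₀pos, le_refl s₀⟩ hs₀pos
  have h2 : f 0 ≤ f s₀ := (hP (hmemball s₀ ⟨le_of_lt hs₀pos, le_refl s₀⟩)).2.2
  linarith

/-- Min at right endpoint 0 of an interval implies derivative nonpositive. -/
lemma hgl_right {f : ℝ → ℝ} {d : ℝ} (hf : HasDerivAt f d 0)
    (h : ∀ t ∈ Ico (-1:ℝ) 0, f 0 ≤ f t) : d ≤ 0 := by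
  have hfw : HasDerivWithinAt f d (Iio 0) 0 := hf.hasDerivWithinAt
  have hslope : Tendsto (slope f 0) (nhdsWithin 0 (Iio 0 \ {0})) (nhds d) :=
    hasDerivWithinAt_iff_tendsto_slope.1 hfw
  have hne : (nhdsWithin (0:ℝ) (Iio 0 \ {0})).NeBot := by
    rw [Set.diff_eq, show Iio (0:ℝ) ∩ {(0:ℝ)}ᶜ = Iio 0 by
      ext z; simp (config := {contextual := true}) [lt_iff_le_and_ne]]
    exact nhdsLT_neBot 0
  refine le_of_tendsto hslope ?_
  have h1 : ∀ᶠ t in nhdsWithin (0:ℝ) (Iio 0 \ {0}), t ∈ Iio 0 \ {0} :=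
    eventually_mem_nhdsWithin
  have h2 : ∀ᶠ t in nhdsWithin (0:ℝ) (Iio 0 \ {0}), -1 < t := by
    apply eventually_nhdsWithin_of_eventually_nhds
    filter_upwards [Ioi_mem_nhds (show (-1:ℝ) < 0 by norm_num)] with t ht using ht
  filter_upwards [h1, h2] with t ht hgt
  have htlt : t < 0 := ht.1
  have hmin : f 0 ≤ f t := h t ⟨le_of_lt hgt, htlt⟩
  rw [slope_def_field]
  rw [sub_zero]
  have hnum : 0 ≤ f t - f 0 := by linarith
  have hden : t < 0 := htlt
  exact div_nonpos_of_nonneg_of_nonpos hnum (le_of_lt hden)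

/-- Second derivative along a line for a C² function on an open set. -/
lemma hgl_line {E : Type*} [NormedAddCommGroup E] [NormedSpace ℝ E]
    {F : E → ℝ} {s : Set E} (hs : IsOpen s) (hF : ContDiffOn ℝ 2 F s)
    {x₀ : E} (hx₀ : x₀ ∈ s) (e : E) :
    (∀ᶠ r in nhds (0:ℝ), DifferentiableAt ℝ (fun r : ℝ => F (x₀ + r • e)) r) ∧
    HasDerivAt (deriv (fun r : ℝ => F (x₀ + r • e)))
      (fderiv ℝ (fun y => fderiv ℝ F y e) x₀ e) 0 := by
  have hLcont : Continuous (fun r : ℝ => x₀ + r • e) := by fun_prop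
  have hmem : ∀ᶠ r in nhds (0:ℝ), x₀ + r • e ∈ s := by
    have : x₀ + (0:ℝ) • e = x₀ := by simp
    exact hLcont.continuousAt.preimage_mem_nhds (by rw [this]; exact hs.mem_nhds hx₀)
  have hline : ∀ r : ℝ, HasDerivAt (fun r : ℝ => x₀ + r • e) e r := by
    intro r
    simpa using ((hasDerivAt_id r).smul_const e).const_add x₀
  have hFd : ∀ y ∈ s, DifferentiableAt ℝ F y := fun y hy =>
    (hF.contDiffAt (hs.mem_nhds hy)).differentiableAt (by norm_num)
  have hder : ∀ᶠ r in nhds (0:ℝ),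
      HasDerivAt (fun r : ℝ => F (x₀ + r • e)) (fderiv ℝ F (x₀ + r • e) e) r := by
    filter_upwards [hmem] with r hr
    exact ((hFd _ hr).hasFDerivAt).comp_hasDerivAt r (hline r)
  refine ⟨hder.mono fun r h => h.differentiableAt, ?_⟩
  have hderiv_eq : deriv (fun r : ℝ => F (x₀ + r • e)) =ᶠ[nhds (0:ℝ)]
      fun r : ℝ => fderiv ℝ F (x₀ + r • e) e := hder.mono fun r h => h.deriv
  have hGC : ContDiffAt ℝ 1 (fderiv ℝ F) x₀ :=
    (hF.contDiffAt (hs.mem_nhds hx₀)).fderiv_right (by norm_num)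
  have hGd : DifferentiableAt ℝ (fun y => fderiv ℝ F y e) x₀ := by
    have h1 : DifferentiableAt ℝ (fderiv ℝ F) x₀ := hGC.differentiableAt (by norm_num)
    exact ((ContinuousLinearMap.apply ℝ ℝ e).differentiableAt).comp x₀ h1
  have hGr : HasDerivAt (fun r : ℝ => fderiv ℝ F (x₀ + r • e) e)
      (fderiv ℝ (fun y => fderiv ℝ F y e) x₀ e) 0 := by
    have h0 : x₀ + (0:ℝ) • e = x₀ := by simp
    have hGd' : DifferentiableAt ℝ (fun y => fderiv ℝ F y e) (x₀ + (0:ℝ) • e) := by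
      rw [h0]; exact hGd
    have hfe : fderiv ℝ (fun y => fderiv ℝ F y e) (x₀ + (0:ℝ) • e) =
        fderiv ℝ (fun y => fderiv ℝ F y e) x₀ := by rw [h0]
    have := (hGd'.hasFDerivAt).comp_hasDerivAt (f := fun r : ℝ => x₀ + r • e) 0 (hline 0)
    rw [hfe] at this
    exact this
  exact hGr.congr_of_eventuallyEq hderiv_eq


theorem heat_growth_lemma (N : ℕ) (hN : 1 ≤ N)
    (u : EuclideanSpace ℝ (Fin N) → ℝ → ℝ)
    (hcont : ContinuousOn (fun p : EuclideanSpace ℝ (Fin N) × ℝ => u p.1 p.2)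
      (closedBall 0 1 ×ˢ Icc (-1 : ℝ) 0))
    (hx : ∀ t ∈ Ioc (-1 : ℝ) 0, ContDiffOn ℝ 2 (fun x => u x t) (ball 0 1))
    (ht : ∀ x ∈ ball (0 : EuclideanSpace ℝ (Fin N)) 1, ∀ t ∈ Ioc (-1 : ℝ) 0,
      DifferentiableAt ℝ (u x) t)
    (hsuper : ∀ x ∈ ball (0 : EuclideanSpace ℝ (Fin N)) 1, ∀ t ∈ Ioc (-1 : ℝ) 0,
      1 ≤ deriv (u x) t - ∑ i, fderiv ℝ
        (fun y => fderiv ℝ (fun z => u z t) y (EuclideanSpace.single i 1))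
        x (EuclideanSpace.single i 1))
    (hbot : ∀ x ∈ closedBall (0 : EuclideanSpace ℝ (Fin N)) 1, 0 ≤ u x (-1))
    (hlat : ∀ x : EuclideanSpace ℝ (Fin N), ‖x‖ = 1 → ∀ t ∈ Ico (-1 : ℝ) 0, 0 ≤ u x t) :
    ∀ κ : ℝ, κ < 1 → ∀ x : EuclideanSpace ℝ (Fin N), ‖x‖ ≤ κ →
      (1 - κ ^ 2) / (1 + 4 * N) ≤ u x 0 := by
  have hcpos : (0:ℝ) < 1 + 4 * (N:ℝ) := by positivity
  -- lateral boundary nonnegativity, extended to t = 0 by continuity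
  have hlat' : ∀ y : EuclideanSpace ℝ (Fin N), ‖y‖ = 1 → ∀ t ∈ Icc (-1:ℝ) 0, 0 ≤ u y t := by
    intro y hy t htI
    rcases eq_or_lt_of_le htI.2 with h0 | h0
    · have hycb : y ∈ closedBall (0:EuclideanSpace ℝ (Fin N)) 1 :=
        mem_closedBall_zero_iff.2 (le_of_eq hy)
      have hcy : ContinuousOn (fun τ => u y τ) (Icc (-1:ℝ) 0) := by
        have hc2 : Continuous (fun τ : ℝ => ((y, τ) : EuclideanSpace ℝ (Fin N) × ℝ)) := by
          fun_prop
        exact hcont.comp hc2.continuousOn (fun τ hτ => ⟨hycb, hτ⟩)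
      have hcw : ContinuousWithinAt (fun τ => u y τ) (Ico (-1:ℝ) 0) 0 :=
        ((hcy 0 ⟨by norm_num, le_refl 0⟩).mono Ico_subset_Icc_self)
      haveI : (nhdsWithin (0:ℝ) (Ico (-1) 0)).NeBot := by
        apply mem_closure_iff_nhdsWithin_neBot.1
        rw [closure_Ico (by norm_num : (-1:ℝ) ≠ 0)]
        exact ⟨by norm_num, le_refl 0⟩
      subst h0
      exact ge_of_tendsto hcw (eventually_mem_nhdsWithin.mono fun τ hτ => hlat y hy τ hτ)
    · exact hlat y hy t ⟨htI.1, h0⟩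
  set w : EuclideanSpace ℝ (Fin N) → ℝ → ℝ :=
    fun y t => u y t - (1 + t) * ((1 - ‖y‖^2) / (1 + 4 * (N:ℝ))) with hw
  have hK : IsCompact (closedBall (0:EuclideanSpace ℝ (Fin N)) 1 ×ˢ Icc (-1:ℝ) 0) :=
    (isCompact_closedBall _ _).prod isCompact_Icc
  have hwcont : ContinuousOn (fun p : EuclideanSpace ℝ (Fin N) × ℝ => w p.1 p.2)
      (closedBall 0 1 ×ˢ Icc (-1:ℝ) 0) := by
    apply hcont.sub
    apply Continuous.continuousOn
    fun_prop
  obtain ⟨p₀, hp₀K, hminp⟩ := hK.exists_isMinOn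
    ⟨((0:EuclideanSpace ℝ (Fin N)), (0:ℝ)), by
      refine mk_mem_prod ?_ ?_
      · simp
      · constructor <;> norm_num⟩ hwcont
  obtain ⟨x₀, t₀⟩ := p₀
  have hmin : ∀ y ∈ closedBall (0:EuclideanSpace ℝ (Fin N)) 1, ∀ t ∈ Icc (-1:ℝ) 0,
      w x₀ t₀ ≤ w y t := fun y hy t htc => isMinOn_iff.1 hminp (y, t) (mk_mem_prod hy htc)
  have hx₀cb : x₀ ∈ closedBall (0:EuclideanSpace ℝ (Fin N)) 1 := hp₀K.1
  have ht₀I : t₀ ∈ Icc (-1:ℝ) 0 := hp₀K.2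
  have hkey : 0 ≤ w x₀ t₀ := by
    by_contra hneg
    push_neg at hneg
    -- the min point is interior in space
    have hx₀lt : ‖x₀‖ < 1 := by
      rcases lt_or_eq_of_le (mem_closedBall_zero_iff.1 hx₀cb) with h | h
      · exact h
      · exfalso
        have hwe : w x₀ t₀ = u x₀ t₀ := by simp [hw, h]
        have := hlat' x₀ h t₀ ht₀I
        rw [hwe] at hneg; linarith
    have hx₀ball : x₀ ∈ ball (0:EuclideanSpace ℝ (Fin N)) 1 := mem_ball_zero_iff.2 hx₀lt
    have ht₀gt : -1 < t₀ := by
      rcases lt_or_eq_of_le ht₀I.1 with h | h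
      · exact h
      · exfalso
        have hwe : w x₀ t₀ = u x₀ t₀ := by simp [hw, ← h]
        have := hbot x₀ hx₀cb
        rw [hwe, ← h] at hneg; linarith
    have ht₀Ioc : t₀ ∈ Ioc (-1:ℝ) 0 := ⟨ht₀gt, ht₀I.2⟩
    set A : ℝ := 1 - ‖x₀‖^2 with hA
    set C : ℝ := (1 + t₀) / (1 + 4*(N:ℝ)) with hC
    -- time derivative at the min point
    have hχ : HasDerivAt (fun t => w x₀ t) (deriv (u x₀) t₀ - A / (1+4*(N:ℝ))) t₀ := by
      have h1 : HasDerivAt (u x₀) (deriv (u x₀) t₀) t₀ := (ht x₀ hx₀ball t₀ ht₀Ioc).hasDerivAt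
      have h2 : HasDerivAt (fun t : ℝ => (1 + t) * (A / (1+4*(N:ℝ)))) (A/(1+4*(N:ℝ))) t₀ := by
        simpa using ((hasDerivAt_id t₀).const_add 1).mul_const (A/(1+4*(N:ℝ)))
      exact h1.sub h2
    have hderiv_le : deriv (u x₀) t₀ ≤ A / (1+4*(N:ℝ)) := by
      rcases eq_or_lt_of_le ht₀I.2 with h0 | h0
      · subst h0
        have := hgl_right hχ (fun t htIc => hmin x₀ hx₀cb t ⟨htIc.1, le_of_lt htIc.2⟩)
        linarith
      · have hloc : IsLocalMin (fun t => w x₀ t) t₀ :=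
          Filter.eventually_of_mem (Icc_mem_nhds ht₀gt h0)
            (fun t htIc => hmin x₀ hx₀cb t htIc)
        have := hloc.hasDerivAt_eq_zero hχ
        linarith
    -- spatial second derivatives at the min point
    have hspace : ∀ i : Fin N, -(2*C) ≤ fderiv ℝ
        (fun y => fderiv ℝ (fun z => u z t₀) y (EuclideanSpace.single i 1))
        x₀ (EuclideanSpace.single i 1) := by
      intro i
      set e := EuclideanSpace.single i (1:ℝ) with he
      have hnorme : ‖e‖ = 1 := by simp [he, EuclideanSpace.norm_single]
      obtain ⟨hev, hder2⟩ := hgl_line isOpen_ball (hx t₀ ht₀Ioc) hx₀ball e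
      set a : ℝ := inner ℝ x₀ e with ha
      have hnormsq : ∀ r : ℝ, ‖x₀ + r • e‖^2 = ‖x₀‖^2 + 2*(r*a) + r^2 := by
        intro r
        rw [norm_add_sq_real, real_inner_smul_right, ← ha, norm_smul, hnorme,
          mul_one, Real.norm_eq_abs, sq_abs]
      set P : ℝ → ℝ := fun r => C * (‖x₀‖^2 + 2*(r*a) + r^2) with hP
      have hPd : ∀ r : ℝ, HasDerivAt P (C*(2*a + 2*r)) r := by
        intro r
        have h1 : HasDerivAt (fun r:ℝ => ‖x₀‖^2 + 2*(r*a) + r^2) (2*a + 2*r) r := by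
          have h2 := ((((hasDerivAt_id r).mul_const a).const_mul 2).const_add
            (‖x₀‖^2)).add (hasDerivAt_pow 2 r)
          exact h2.congr_deriv (by norm_num)
        exact h1.const_mul C
      set φ : ℝ → ℝ := fun r => u (x₀ + r • e) t₀ + P r with hφ
      have hident : ∀ y : EuclideanSpace ℝ (Fin N), u y t₀ + C*‖y‖^2 = w y t₀ + C := by
        intro y
        rw [hw, hC]
        field_simp
        ring
      have hball : ∀ᶠ r in nhds (0:ℝ), x₀ + r • e ∈ ball (0:EuclideanSpace ℝ (Fin N)) 1 := by
        have hLcont : Continuous (fun r : ℝ => x₀ + r • e) := by fun_prop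
        have h0e : x₀ + (0:ℝ) • e = x₀ := by simp
        exact hLcont.continuousAt.preimage_mem_nhds (by rw [h0e]; exact isOpen_ball.mem_nhds hx₀ball)
      have hφmin : IsLocalMin φ 0 := by
        filter_upwards [hball] with r hr
        have h1 := hmin (x₀ + r • e) (ball_subset_closedBall hr) t₀ ht₀I
        have e0 : φ 0 = w x₀ t₀ + C := by
          have : φ 0 = u x₀ t₀ + C*‖x₀‖^2 := by
            simp only [hφ, hP, zero_smul, add_zero, mul_zero, zero_mul, zero_pow]
            ring
          rw [this, hident]
        have er : φ r = w (x₀ + r • e) t₀ + C := by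
          have : φ r = u (x₀ + r • e) t₀ + C*‖x₀ + r • e‖^2 := by
            rw [hφ, hP, hnormsq r]
          rw [this, hident]
        rw [e0, er]
        linarith
      have hφdiff : ∀ᶠ r in nhds (0:ℝ), DifferentiableAt ℝ φ r := by
        filter_upwards [hev] with r hr
        exact hr.add (hPd r).differentiableAt
      have hφderiv : deriv φ =ᶠ[nhds (0:ℝ)]
          fun r => deriv (fun r : ℝ => u (x₀ + r • e) t₀) r + C*(2*a + 2*r) := by
        filter_upwards [hev] with r hr
        rw [hφ, deriv_fun_add hr (hPd r).differentiableAt, (hPd r).deriv]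
      have hHD : HasDerivAt (deriv φ)
          (fderiv ℝ (fun y => fderiv ℝ (fun z => u z t₀) y e) x₀ e + 2*C) 0 := by
        have h2 : HasDerivAt (fun r : ℝ => C*(2*a + 2*r)) (2*C) 0 := by
          have h3 := (((hasDerivAt_id (0:ℝ)).const_mul 2).const_add (2*a)).const_mul C
          exact h3.congr_deriv (by ring)
        exact (hder2.add h2).congr_of_eventuallyEq hφderiv
      have := hgl_sdt hφdiff hHD hφmin
      rw [he] at *
      linarith
    -- combine via the supersolution inequality
    have hsum := hsuper x₀ hx₀ball t₀ ht₀Ioc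
    have hS : (N:ℝ) * (-(2*C)) ≤ ∑ i, fderiv ℝ
        (fun y => fderiv ℝ (fun z => u z t₀) y (EuclideanSpace.single i 1))
        x₀ (EuclideanSpace.single i 1) := by
      have h4 := Finset.card_nsmul_le_sum Finset.univ
        (fun i : Fin N => fderiv ℝ
          (fun y => fderiv ℝ (fun z => u z t₀) y (EuclideanSpace.single i 1))
          x₀ (EuclideanSpace.single i 1)) (-(2*C)) (fun i _ => hspace i)
      simpa [nsmul_eq_mul] using h4
    have hfin : (1:ℝ) ≤ A/(1+4*(N:ℝ)) + 2*C*N := by nlinarith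
    have hA1 : A ≤ 1 := by nlinarith [norm_nonneg x₀]
    have hCle : C ≤ 1/(1+4*(N:ℝ)) := by
      rw [hC, div_le_div_iff₀ hcpos hcpos]
      nlinarith [ht₀I.2]
    have hAle : A/(1+4*(N:ℝ)) ≤ 1/(1+4*(N:ℝ)) := by gcongr
    have hN0 : (0:ℝ) ≤ N := N.cast_nonneg
    have hstep : (1:ℝ) ≤ ((1:ℝ) + 2*N)/(1+4*(N:ℝ)) := by
      have h2CN : 2*C*(N:ℝ) ≤ 2*((1:ℝ)/(1+4*(N:ℝ)))*N := by nlinarith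
      calc (1:ℝ) ≤ A/(1+4*(N:ℝ)) + 2*C*N := hfin
        _ ≤ 1/(1+4*(N:ℝ)) + 2*((1:ℝ)/(1+4*(N:ℝ)))*N := add_le_add hAle h2CN
        _ = ((1:ℝ) + 2*N)/(1+4*(N:ℝ)) := by ring
    rw [le_div_iff₀ hcpos] at hstep
    have hN1 : (1:ℝ) ≤ N := by exact_mod_cast hN
    nlinarith
  -- conclusion
  intro κ hκ x hxκ
  have hxcb : x ∈ closedBall (0:EuclideanSpace ℝ (Fin N)) 1 :=
    mem_closedBall_zero_iff.2 (le_of_lt (lt_of_le_of_lt hxκ hκ))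
  have h0 := hmin x hxcb 0 ⟨by norm_num, le_refl 0⟩
  have h1 : 0 ≤ w x 0 := le_trans hkey h0
  have hval : (1 - ‖x‖^2)/(1+4*(N:ℝ)) ≤ u x 0 := by
    have hwx : w x 0 = u x 0 - (1 - ‖x‖^2)/(1+4*(N:ℝ)) := by
      simp only [hw]
      ring
    rw [hwx] at h1
    linarith
  have hκ0 : 0 ≤ κ := le_trans (norm_nonneg x) hxκ
  have hsq : ‖x‖^2 ≤ κ^2 := by nlinarith [norm_nonneg x]
  have hmono : (1 - κ^2)/(1+4*(N:ℝ)) ≤ (1-‖x‖^2)/(1+4*(N:ℝ)) := by gcongr <;> linarith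
  calc (1 - κ^2)/(1+4*(N:ℝ)) ≤ (1-‖x‖^2)/(1+4*(N:ℝ)) := hmono
    _ ≤ u x 0 := hval
end

section
/- Let N ≥ 1 and let u : B̄₁(0) × [−1,0] → ℝ be a nonnegative classical supersolution of the heat equation (∂_t u − Δu ≥ 0 in B₁(0) × (−1,0], u continuous up to the boundary) with u(x, −1) ≥ 1 for all |x| ≤ δ, where 0 < δ ≤ 1/4. Then there exist constants γ > 0 and α > 0 depending only on N (explicitly, any α > C₀(C₀+8)/(3/2) with C₀ = 2(1/4 − δ²) + 1 + 4N works, and γ = (1/2)⁴) such that u(x, 0) ≥ γ·δ^{2α−4} for all |x| ≤ 1/2. -/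
open Metric Set

lemma deriv_nonpos_of_isMinOn_left {f : ℝ → ℝ} {m t₀ η : ℝ} (hη : 0 < η)
    (hd : HasDerivAt f m t₀) (hmin : ∀ t ∈ Icc (t₀ - η) t₀, f t₀ ≤ f t) : m ≤ 0 := by
  have hs := hasDerivAt_iff_tendsto_slope.mp hd
  have hs' : Filter.Tendsto (slope f t₀) (nhdsWithin t₀ (Iio t₀)) (nhds m) :=
    hs.mono_left (nhdsWithin_mono _ (fun x hx => ne_of_lt hx))
  refine le_of_tendsto hs' ?_
  filter_upwards [Ioo_mem_nhdsLT_of_mem (⟨by linarith, le_refl t₀⟩ : t₀ ∈ Ioc (t₀ - η) t₀)]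
    with t htI
  have h1 : f t₀ ≤ f t := hmin t ⟨htI.1.le, htI.2.le⟩
  have h2 : t - t₀ < 0 := by linarith [htI.2]
  rw [slope_def_field, div_nonpos_iff]
  exact Or.inl ⟨by linarith, by linarith⟩

lemma second_deriv_nonneg_of_isMinOn {f f' : ℝ → ℝ} {L η : ℝ} (hη : 0 < η)
    (hd : ∀ s ∈ Icc (-η) η, HasDerivAt f (f' s) s)
    (hmin : ∀ s ∈ Icc (-η) η, f 0 ≤ f s)
    (hL : HasDerivAt f' L 0) : 0 ≤ L := by
  have hmem : Icc (-η) η ∈ nhds (0:ℝ) := Icc_mem_nhds (by linarith) hη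
  have hloc : IsLocalMin f 0 := by
    filter_upwards [hmem] with s hs using hmin s hs
  have hf'0 : f' 0 = 0 := hloc.hasDerivAt_eq_zero (hd 0 ⟨by linarith, hη.le⟩)
  by_contra hneg
  push_neg at hneg
  have hs := hasDerivAt_iff_tendsto_slope.mp hL
  have hs' : Filter.Tendsto (slope f' 0) (nhdsWithin 0 (Ioi 0)) (nhds L) :=
    hs.mono_left (nhdsWithin_mono _ (fun x hx => ne_of_gt hx))
  have hev : ∀ᶠ s in nhdsWithin 0 (Ioi 0), slope f' 0 s < 0 :=
    hs'.eventually_lt_const hneg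
  rw [Filter.eventually_iff, mem_nhdsGT_iff_exists_Ioo_subset] at hev
  obtain ⟨b, hb, hsub⟩ := hev
  have hb0 : 0 < b := hb
  set s₀ := min (b/2) η with hs₀def
  have hs₀pos : 0 < s₀ := lt_min (by linarith) hη
  have hs₀b : s₀ < b := lt_of_le_of_lt (min_le_left _ _) (by linarith)
  have hs₀η : s₀ ≤ η := min_le_right _ _
  have hsubset : Icc (0:ℝ) s₀ ⊆ Icc (-η) η := fun z hz =>
    ⟨by cases hz; linarith, by cases hz; linarith⟩
  have hcont : ContinuousOn f (Icc 0 s₀) := fun z hz =>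
    ((hd z (hsubset hz)).continuousAt).continuousWithinAt
  obtain ⟨ξ, hξ, hξeq⟩ := exists_hasDerivAt_eq_slope f f' hs₀pos hcont
    (fun z hz => hd z (hsubset ⟨hz.1.le, hz.2.le⟩))
  have hξ2 : f' ξ < 0 := by
    have hmem2 : ξ ∈ Ioo (0:ℝ) b := ⟨hξ.1, lt_trans hξ.2 hs₀b⟩
    have hslope := hsub hmem2
    rw [Set.mem_setOf_eq, slope_def_field, hf'0, sub_zero] at hslope
    have hxpos : 0 < ξ := hξ.1
    by_contra hcon
    push_neg at hcon
    have : 0 ≤ f' ξ / (ξ - 0) := div_nonneg hcon (by linarith)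
    linarith
  have hge : 0 ≤ f' ξ := by
    rw [hξeq]
    have : f 0 ≤ f s₀ := hmin s₀ ⟨by linarith, hs₀η⟩
    apply div_nonneg <;> linarith
  linarith

lemma sq_lt_imp {x y : ℝ} (hx : 0 ≤ x) (hy : 0 ≤ y) (h : x^2 < y^2) : x < y := by
  nlinarith

lemma line_sq_bound {b s r G F η : ℝ} (hb2 : b^2 ≤ r) (hrG : r ≤ G) (hG : G ≤ 9/16)
    (hF : F = G - r) (hFpos : 0 < F) (hη1 : η ≤ 1) (hη2 : η ≤ F/4) (hs : |s| ≤ η) :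
    r + 2*b*s + s^2 < G := by
  have hr0 : 0 ≤ r := le_trans (sq_nonneg b) hb2
  have hb1 : |b| ≤ 1 := by nlinarith [abs_nonneg b, sq_abs b]
  have h1 : b*s ≤ |b| * |s| := by rw [← abs_mul]; exact le_abs_self _
  have h2 : |b| * |s| ≤ |s| := mul_le_of_le_one_left (abs_nonneg s) hb1
  have h3 : s^2 ≤ |s| := by nlinarith [sq_abs s, abs_nonneg s]
  have h4 : |s| ≤ η := hs
  linarith

lemma E_nonpos {a α F G n : ℝ} (hkey : (2*a + 4*n + 8)^2 ≤ 32*a*α) (hF : 0 ≤ F) (hG : 0 ≤ G) :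
    2*a*F*G - a*α*F^2 - (8*(G - F) - 4*n*F)*G ≤ 0 := by
  nlinarith [mul_nonneg (sub_nonneg.mpr hkey) (sq_nonneg F), sq_nonneg ((2*a + 4*n + 8)*F - 16*G)]

set_option maxHeartbeats 1000000 in
theorem heat_barrier_lower_bound (N : ℕ) (hN : 1 ≤ N) (δ : ℝ) (hδ0 : 0 < δ) (hδ : δ ≤ 1 / 4)
    (u : EuclideanSpace ℝ (Fin N) → ℝ → ℝ)
    (hcont : ContinuousOn (fun p : EuclideanSpace ℝ (Fin N) × ℝ => u p.1 p.2)
      (closedBall 0 1 ×ˢ Icc (-1 : ℝ) 0))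
    (hx : ∀ t ∈ Ioc (-1 : ℝ) 0, ContDiffOn ℝ 2 (fun x => u x t) (ball 0 1))
    (ht : ∀ x ∈ ball (0 : EuclideanSpace ℝ (Fin N)) 1, ∀ t ∈ Ioc (-1 : ℝ) 0,
      DifferentiableAt ℝ (u x) t)
    (hnonneg : ∀ x ∈ closedBall (0 : EuclideanSpace ℝ (Fin N)) 1, ∀ t ∈ Icc (-1 : ℝ) 0,
      0 ≤ u x t)
    (hsuper : ∀ x ∈ ball (0 : EuclideanSpace ℝ (Fin N)) 1, ∀ t ∈ Ioc (-1 : ℝ) 0,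
      0 ≤ deriv (u x) t - ∑ i, fderiv ℝ
        (fun y => fderiv ℝ (fun z => u z t) y (EuclideanSpace.single i 1))
        x (EuclideanSpace.single i 1))
    (hinit : ∀ x : EuclideanSpace ℝ (Fin N), ‖x‖ ≤ δ → 1 ≤ u x (-1)) :
    ∀ α : ℝ, (2 * (1 / 4 - δ ^ 2) + 1 + 4 * N) * ((2 * (1 / 4 - δ ^ 2) + 1 + 4 * N) + 8)
        / (3 / 2) < α →
      ∀ x : EuclideanSpace ℝ (Fin N), ‖x‖ ≤ 1 / 2 →
        (1 / 2 : ℝ) ^ 4 * δ ^ (2 * α - 4) ≤ u x 0 := by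
  intro α hα x hx12
  have hδ2 : δ ^ 2 ≤ 1/16 := by nlinarith
  obtain ⟨a, ha_def⟩ : ∃ a : ℝ, a = 9/16 - δ^2 := ⟨_, rfl⟩
  have haL : 1/2 ≤ a := by rw [ha_def]; linarith
  have haU : a ≤ 9/16 := by rw [ha_def]; nlinarith
  have hδsq : 0 < δ^2 := pow_pos hδ0 2
  have hNr : (1:ℝ) ≤ (N:ℝ) := by exact_mod_cast hN
  have hC5 : (5:ℝ) ≤ 2 * (1 / 4 - δ ^ 2) + 1 + 4 * N := by linarith
  have h1 : (2 * (1 / 4 - δ ^ 2) + 1 + 4 * (N:ℝ)) * ((2 * (1 / 4 - δ ^ 2) + 1 + 4 * N) + 8)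
      < α * (3/2) := (div_lt_iff₀ (by norm_num)).mp hα
  have hαpos : 0 < α := by nlinarith
  have hαkey : (2*a + 4*(N:ℝ) + 8)^2 ≤ 32*a*α := by
    have hCC : 2*a + 4*(N:ℝ) + 8 = (2 * (1 / 4 - δ ^ 2) + 1 + 4 * N) + 61/8 := by
      rw [ha_def]; ring
    rw [hCC]
    nlinarith [hC5, h1, hαpos, haL, mul_le_mul_of_nonneg_right
      (by linarith : (16:ℝ) ≤ 32*a) hαpos.le]
  obtain ⟨c, hc_def⟩ : ∃ c : ℝ, c = δ ^ (2*α - 4) := ⟨_, rfl⟩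
  have hcpos : 0 < c := by rw [hc_def]; exact Real.rpow_pos_of_pos hδ0 _
  obtain ⟨g, hg_def⟩ : ∃ g : ℝ → ℝ, g = fun t => a*(1+t) + δ^2 := ⟨_, rfl⟩
  have hgpos : ∀ t : ℝ, -1 ≤ t → 0 < g t := by
    intro t htl; simp only [hg_def]
    have h1 : 0 ≤ a * (1+t) := mul_nonneg (by linarith) (by linarith)
    nlinarith [pow_pos hδ0 2]
  have hgle : ∀ t : ℝ, t ≤ 0 → g t ≤ 9/16 := by
    intro t htu; simp only [hg_def]; nlinarith
  obtain ⟨Ψ, hΨ_def⟩ : ∃ Ψ : EuclideanSpace ℝ (Fin N) → ℝ → ℝ,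
    Ψ = fun y t => c * ((g t - ‖y‖^2)^2 * (g t) ^ (-α)) := ⟨_, rfl⟩
  obtain ⟨K, hK_def⟩ : ∃ K : Set (EuclideanSpace ℝ (Fin N) × ℝ),
    K = (closedBall 0 1 ×ˢ Icc (-1:ℝ) 0) ∩ {p | ‖p.1‖^2 ≤ g p.2} := ⟨_, rfl⟩
  have hmemK : ∀ (y : EuclideanSpace ℝ (Fin N)) (t : ℝ), ‖y‖ ≤ 1 → -1 ≤ t → t ≤ 0 →
      ‖y‖^2 ≤ g t → (y, t) ∈ K := by
    intro y t h1 h2 h3 h4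
    rw [hK_def]
    refine ⟨⟨?_, h2, h3⟩, h4⟩
    simpa [mem_closedBall, dist_zero_right] using h1
  have hco1 : Continuous fun p : EuclideanSpace ℝ (Fin N) × ℝ => ‖p.1‖^2 :=
    (continuous_fst.norm).pow 2
  have hco2 : Continuous fun p : EuclideanSpace ℝ (Fin N) × ℝ => g p.2 := by
    simp only [hg_def]
    exact (continuous_const.mul (continuous_const.add continuous_snd)).add continuous_const
  have hKcomp : IsCompact K := by
    rw [hK_def]
    exact ((isCompact_closedBall 0 1).prod isCompact_Icc).inter_right
      (isClosed_le hco1 hco2)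
  have hKne : K.Nonempty := by
    refine ⟨(0, 0), hmemK 0 0 (by simp) (by norm_num) le_rfl ?_⟩
    simp only [hg_def, norm_zero]; nlinarith
  have main : ∀ ε : ℝ, 0 < ε → ∀ p ∈ K, Ψ p.1 p.2 - ε*(1+p.2) ≤ u p.1 p.2 := by
    intro ε hε
    obtain ⟨v, hv_def⟩ : ∃ v : EuclideanSpace ℝ (Fin N) × ℝ → ℝ,
      v = fun p => u p.1 p.2 - Ψ p.1 p.2 + ε*(1+p.2) := ⟨_, rfl⟩
    have hvcont : ContinuousOn v K := by
      rw [hv_def]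
      refine ContinuousOn.add (ContinuousOn.sub ?_ ?_) ?_
      · exact hcont.mono (by rw [hK_def]; exact inter_subset_left)
      · rw [hΨ_def]
        refine ContinuousOn.mul continuousOn_const (ContinuousOn.mul ?_ ?_)
        · exact ((hco2.sub hco1).pow 2).continuousOn
        · refine hco2.continuousOn.rpow_const (fun p hp => Or.inl (ne_of_gt (hgpos p.2 ?_)))
          rw [hK_def] at hp
          exact hp.1.2.1
      · exact ((continuous_const.mul (continuous_const.add continuous_snd)).continuousOn)
    obtain ⟨p₀, hp₀K, hp₀min⟩ := hKcomp.exists_isMinOn hKne hvcont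
    have hv0 : 0 ≤ v p₀ := by
      by_contra hneg
      push_neg at hneg
      obtain ⟨x₀, t₀⟩ := p₀
      have hK0 := hp₀K
      rw [hK_def] at hK0
      obtain ⟨⟨hx₀cb, ht₀l, ht₀u⟩, hFle⟩ := hK0
      have hx₀n1 : ‖x₀‖ ≤ 1 := mem_closedBall_zero_iff.mp hx₀cb
      have hu0 : 0 ≤ u x₀ t₀ := hnonneg x₀ hx₀cb t₀ ⟨ht₀l, ht₀u⟩
      have hFle' : ‖x₀‖^2 ≤ g t₀ := hFle
      have hεt₀ : 0 ≤ ε*(1+t₀) := mul_nonneg hε.le (by linarith)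
      have hvval : v (x₀, t₀) = u x₀ t₀ - Ψ x₀ t₀ + ε*(1+t₀) := by rw [hv_def]
      rcases eq_or_lt_of_le hFle' with heq | hlt
      · -- lateral boundary : Ψ = 0
        have hΨ0 : Ψ x₀ t₀ = 0 := by
          rw [hΨ_def]
          simp only
          rw [show g t₀ - ‖x₀‖^2 = 0 by linarith]
          ring
        rw [hvval, hΨ0] at hneg
        linarith
      · rcases eq_or_lt_of_le ht₀l with hbot | ht₀gt
        · -- initial time t₀ = -1
          have ht₀ : t₀ = -1 := hbot.symm
          subst ht₀
          have hgm1 : g (-1) = δ^2 := by simp only [hg_def]; ring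
          rw [hgm1] at hlt
          have hxδ : ‖x₀‖ ≤ δ := by nlinarith [norm_nonneg x₀]
          have hu1 : 1 ≤ u x₀ (-1) := hinit x₀ hxδ
          have hΨle : Ψ x₀ (-1) ≤ 1 := by
            rw [hΨ_def]
            simp only
            rw [hgm1]
            have hp1 : (0:ℝ) < (δ^2) ^ (-α) := Real.rpow_pos_of_pos hδsq _
            have hb1 : (δ^2 - ‖x₀‖^2)^2 ≤ (δ^2)^2 := by nlinarith [norm_nonneg x₀]
            have hkey : c * ((δ^2)^2 * (δ^2) ^ (-α)) = 1 := by
              rw [hc_def, ← Real.rpow_natCast (δ^2) 2, ← Real.rpow_natCast δ 2,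
                ← Real.rpow_mul hδ0.le, ← Real.rpow_mul hδ0.le, ← Real.rpow_add hδ0]
              rw [← Real.rpow_add hδ0,
                show 2*α - 4 + (((2:ℕ):ℝ)*((2:ℕ):ℝ) + ((2:ℕ):ℝ)*(-α)) = 0 by push_cast; ring]
              exact Real.rpow_zero δ
            calc c * ((δ^2 - ‖x₀‖^2)^2 * (δ^2) ^ (-α))
                ≤ c * ((δ^2)^2 * (δ^2) ^ (-α)) := by
                  apply mul_le_mul_of_nonneg_left _ hcpos.le
                  exact mul_le_mul_of_nonneg_right hb1 hp1.le
              _ = 1 := hkey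
          rw [hvval] at hneg
          have : ε*(1+(-1:ℝ)) = 0 := by ring
          rw [this] at hneg
          linarith
        · -- interior case
          have ht₀Ioc : t₀ ∈ Ioc (-1:ℝ) 0 := ⟨ht₀gt, ht₀u⟩
          have hG₀pos : 0 < g t₀ := hgpos t₀ ht₀l
          have hG₀le : g t₀ ≤ 9/16 := hgle t₀ ht₀u
          have hr2nn : (0:ℝ) ≤ ‖x₀‖^2 := sq_nonneg _
          have hx₀lt : ‖x₀‖ < 1 :=
            sq_lt_imp (norm_nonneg x₀) (by norm_num) (by rw [one_pow]; linarith)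
          have hx₀ball : x₀ ∈ ball (0:EuclideanSpace ℝ (Fin N)) 1 := mem_ball_zero_iff.mpr hx₀lt
          obtain ⟨F₀, hF₀_def⟩ : ∃ F₀ : ℝ, F₀ = g t₀ - ‖x₀‖^2 := ⟨_, rfl⟩
          have hF₀pos : 0 < F₀ := by rw [hF₀_def]; linarith
          have hF₀G : F₀ ≤ g t₀ := by rw [hF₀_def]; linarith
          obtain ⟨Gα, hGα_def⟩ : ∃ Gα : ℝ, Gα = (g t₀) ^ (-α) := ⟨_, rfl⟩
          obtain ⟨Gα1, hGα1_def⟩ : ∃ G : ℝ, G = (g t₀) ^ (-α-1) := ⟨_, rfl⟩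
          have hGαpos : 0 < Gα := by rw [hGα_def]; exact Real.rpow_pos_of_pos hG₀pos _
          have hGα1pos : 0 < Gα1 := by rw [hGα1_def]; exact Real.rpow_pos_of_pos hG₀pos _
          have hGαeq : Gα = Gα1 * g t₀ := by
            rw [hGα_def, hGα1_def]
            have h := Real.rpow_add hG₀pos (-α-1) 1
            rw [Real.rpow_one, show -α-1+1 = -α by ring] at h
            exact h
          -- time derivative of the barrier
          have hg' : HasDerivAt g a t₀ := by
            rw [hg_def]
            have h := (((hasDerivAt_id t₀).const_add (1:ℝ)).const_mul a).add_const (δ^2)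
            exact h.congr_deriv (by ring)
          have h1t : HasDerivAt (fun t => (g t - ‖x₀‖^2)^2) (2*(g t₀ - ‖x₀‖^2)*a) t₀ := by
            have h := (hg'.sub_const (‖x₀‖^2)).pow 2
            refine h.congr_deriv ?_
            push_cast; ring
          have h2t : HasDerivAt (fun t => (g t) ^ (-α)) ((-α * (g t₀)^(-α-1)) * a) t₀ := by
            have h := (Real.hasDerivAt_rpow_const (p := -α) (Or.inl hG₀pos.ne')).comp t₀ hg'
            exact h
          have hΨt : HasDerivAt (fun t => Ψ x₀ t)
              (c * (2*F₀*a*Gα - α*F₀^2*Gα1*a)) t₀ := by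
            have hfun : (fun t => Ψ x₀ t) = (fun t => c * ((g t - ‖x₀‖^2)^2 * (g t) ^ (-α))) := by
              funext t; rw [hΨ_def]
            rw [hfun]
            have h := (h1t.mul h2t).const_mul c
            refine h.congr_deriv ?_
            rw [hF₀_def, hGα_def, hGα1_def]
            ring
          have hvt : HasDerivAt (fun t => v (x₀, t))
              (deriv (u x₀) t₀ - c * (2*F₀*a*Gα - α*F₀^2*Gα1*a) + ε) t₀ := by
            have hA : HasDerivAt (u x₀) (deriv (u x₀) t₀) t₀ :=
              (ht x₀ hx₀ball t₀ ht₀Ioc).hasDerivAt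
            have hεt : HasDerivAt (fun t : ℝ => ε*(1+t)) ε t₀ := by
              have h := ((hasDerivAt_id t₀).const_add (1:ℝ)).const_mul ε
              exact h.congr_deriv (by ring)
            have hfun : (fun t => v (x₀, t)) = fun t => (u x₀ t - Ψ x₀ t) + ε*(1+t) := by
              funext t; rw [hv_def]
            rw [hfun]
            exact (hA.sub hΨt).add hεt
          obtain ⟨ηt, hηt_def⟩ : ∃ η : ℝ, η = min (t₀+1) F₀ := ⟨_, rfl⟩
          have hηtpos : 0 < ηt := by rw [hηt_def]; exact lt_min (by linarith) hF₀pos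
          have htmin : ∀ t ∈ Icc (t₀ - ηt) t₀, v (x₀, t₀) ≤ v (x₀, t) := by
            intro t htmem
            obtain ⟨htl2, htu2⟩ := htmem
            have hηt1 : ηt ≤ t₀ + 1 := by rw [hηt_def]; exact min_le_left _ _
            have hηt2 : ηt ≤ F₀ := by rw [hηt_def]; exact min_le_right _ _
            have hgt : ‖x₀‖^2 ≤ g t := by
              have hdiff : g t₀ - g t = a*(t₀ - t) := by simp only [hg_def]; ring
              have hb : a*(t₀-t) ≤ 1*(t₀-t) :=
                mul_le_mul_of_nonneg_right (by linarith) (by linarith)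
              have hF' : F₀ = g t₀ - ‖x₀‖^2 := hF₀_def
              linarith
            exact (isMinOn_iff.mp hp₀min) _ (hmemK x₀ t hx₀n1 (by linarith) (by linarith) hgt)
          have htime : deriv (u x₀) t₀ - c * (2*F₀*a*Gα - α*F₀^2*Gα1*a) + ε ≤ 0 :=
            deriv_nonpos_of_isMinOn_left hηtpos hvt htmin
          -- spatial second derivatives
          have hspace : ∀ i : Fin N,
              c * ((8*(x₀ i)^2 - 4*F₀) * Gα) ≤
              fderiv ℝ (fun y => fderiv ℝ (fun z => u z t₀) y (EuclideanSpace.single i 1)) x₀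
                (EuclideanSpace.single i 1) := by
            intro i
            obtain ⟨e, he_def⟩ : ∃ e : EuclideanSpace ℝ (Fin N),
              e = EuclideanSpace.single i (1:ℝ) := ⟨_, rfl⟩
            obtain ⟨b, hb_def⟩ : ∃ b : ℝ, b = x₀ i := ⟨_, rfl⟩
            have hnorm : ‖x₀‖^2 = ∑ j, (x₀ j)^2 := by
              rw [EuclideanSpace.norm_eq, Real.sq_sqrt (by positivity)]
              simp [Real.norm_eq_abs, sq_abs]
            have hbsq : b^2 ≤ ‖x₀‖^2 := by
              rw [hb_def, hnorm]
              exact Finset.single_le_sum (fun j _ => sq_nonneg (x₀ j)) (Finset.mem_univ i)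
            have hq : ∀ s : ℝ, ‖x₀ + s • e‖^2 = ‖x₀‖^2 + 2*b*s + s^2 := by
              intro s
              rw [norm_add_sq_real, real_inner_smul_right]
              have hin : (inner ℝ x₀ e : ℝ) = b := by
                rw [he_def, hb_def, real_inner_comm]
                simp [EuclideanSpace.inner_single_left]
              rw [hin, norm_smul, he_def, EuclideanSpace.norm_single]
              simp only [Real.norm_eq_abs, mul_pow, sq_abs, abs_one, one_pow]
              ring
            obtain ⟨η, hη_def⟩ : ∃ η : ℝ, η = min 1 (F₀/4) := ⟨_, rfl⟩
            have hηpos : 0 < η := by rw [hη_def]; exact lt_min one_pos (by linarith)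
            have hη1 : η ≤ 1 := by rw [hη_def]; exact min_le_left _ _
            have hη2 : η ≤ F₀/4 := by rw [hη_def]; exact min_le_right _ _
            have hqlt : ∀ s ∈ Icc (-η) η, ‖x₀ + s • e‖^2 < g t₀ := by
              intro s hs
              obtain ⟨hs1, hs2⟩ := hs
              rw [hq s]
              exact line_sq_bound hbsq (by linarith) hG₀le hF₀_def hF₀pos hη1 hη2
                (abs_le.mpr ⟨by linarith, hs2⟩)
            have hballm : ∀ s ∈ Icc (-η) η, x₀ + s • e ∈ ball (0:EuclideanSpace ℝ (Fin N)) 1 := by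
              intro s hs
              rw [mem_ball_zero_iff]
              exact sq_lt_imp (norm_nonneg _) (by norm_num)
                (by rw [one_pow]; linarith [hqlt s hs])
            have hKm : ∀ s ∈ Icc (-η) η, (x₀ + s • e, t₀) ∈ K := by
              intro s hs
              exact hmemK _ t₀ (mem_ball_zero_iff.mp (hballm s hs)).le ht₀l ht₀u
                (le_of_lt (hqlt s hs))
            have hline : ∀ s : ℝ, HasDerivAt (fun s : ℝ => x₀ + s • e) e s := by
              intro s
              have h := ((hasDerivAt_id s).smul_const e).const_add x₀
              simpa using h
            have hwd : ∀ s ∈ Icc (-η) η, DifferentiableAt ℝ (fun z => u z t₀) (x₀ + s • e) := by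
              intro s hs
              exact ((hx t₀ ht₀Ioc).contDiffAt
                (isOpen_ball.mem_nhds (hballm s hs))).differentiableAt (by norm_num)
            have hu1 : ∀ s ∈ Icc (-η) η, HasDerivAt (fun s => u (x₀ + s • e) t₀)
                (fderiv ℝ (fun z => u z t₀) (x₀ + s • e) e) s := by
              intro s hs
              have h := ((hwd s hs).hasFDerivAt).comp_hasDerivAt s (hline s)
              simpa [Function.comp_def] using h
            have hq' : ∀ s : ℝ, HasDerivAt (fun s : ℝ => ‖x₀‖^2 + 2*b*s + s^2) (2*b + 2*s) s := by
              intro s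
              have h := (((hasDerivAt_id s).const_mul (2*b)).const_add (‖x₀‖^2)).add
                (hasDerivAt_pow 2 s)
              refine h.congr_deriv ?_
              push_cast; ring
            have hψ1 : ∀ s : ℝ, HasDerivAt (fun s => Ψ (x₀ + s • e) t₀)
                (c * ((2*(g t₀ - (‖x₀‖^2 + 2*b*s + s^2))*(2*b + 2*s)) * (-Gα))) s := by
              intro s
              have hfun : (fun s => Ψ (x₀ + s • e) t₀)
                  = fun s => c * ((g t₀ - (‖x₀‖^2 + 2*b*s + s^2))^2 * Gα) := by
                funext s
                rw [hΨ_def]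
                simp only
                rw [hq s, hGα_def]
              rw [hfun]
              have h := ((((hq' s).const_sub (g t₀)).pow 2).mul_const Gα).const_mul c
              refine h.congr_deriv ?_
              push_cast; ring
            obtain ⟨f, hf_def⟩ : ∃ f : ℝ → ℝ,
              f = fun s => u (x₀ + s • e) t₀ - Ψ (x₀ + s • e) t₀ := ⟨_, rfl⟩
            obtain ⟨f', hf'_def⟩ : ∃ f' : ℝ → ℝ, f' = fun s =>
              fderiv ℝ (fun z => u z t₀) (x₀ + s • e) e
                - c * ((2*(g t₀ - (‖x₀‖^2 + 2*b*s + s^2))*(2*b + 2*s)) * (-Gα)) := ⟨_, rfl⟩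
            have hd : ∀ s ∈ Icc (-η) η, HasDerivAt f (f' s) s := by
              intro s hs
              rw [hf_def, hf'_def]
              exact (hu1 s hs).sub (hψ1 s)
            have hmin : ∀ s ∈ Icc (-η) η, f 0 ≤ f s := by
              intro s hs
              have h : u x₀ t₀ - Ψ x₀ t₀ + ε*(1+t₀)
                  ≤ u (x₀ + s • e) t₀ - Ψ (x₀ + s • e) t₀ + ε*(1+t₀) := by
                have h := (isMinOn_iff.mp hp₀min) _ (hKm s hs)
                rw [hv_def] at h
                exact h
              have h0 : x₀ + (0:ℝ) • e = x₀ := by simp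
              rw [hf_def]
              simp only
              rw [h0]
              linarith
            have hDdiff : DifferentiableAt ℝ
                (fun y => fderiv ℝ (fun z => u z t₀) y (EuclideanSpace.single i 1)) x₀ := by
              have hw2 : ContDiffAt ℝ 2 (fun z => u z t₀) x₀ :=
                (hx t₀ ht₀Ioc).contDiffAt (isOpen_ball.mem_nhds hx₀ball)
              have hfd : ContDiffAt ℝ 1 (fderiv ℝ (fun z => u z t₀)) x₀ :=
                hw2.fderiv_right (by norm_num)
              exact (hfd.differentiableAt one_ne_zero).clm_apply (differentiableAt_const _)
            have h0e : x₀ + (0:ℝ) • e = x₀ := by simp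
            have hu2 : HasDerivAt (fun s : ℝ => fderiv ℝ (fun z => u z t₀) (x₀ + s • e) e)
                (fderiv ℝ (fun y => fderiv ℝ (fun z => u z t₀) y (EuclideanSpace.single i 1)) x₀
                  (EuclideanSpace.single i 1)) (0:ℝ) := by
              have h1 : HasFDerivAt
                  (fun y => fderiv ℝ (fun z => u z t₀) y (EuclideanSpace.single i 1))
                  (fderiv ℝ (fun y => fderiv ℝ (fun z => u z t₀) y (EuclideanSpace.single i 1)) x₀)
                  (x₀ + (0:ℝ) • e) := by
                rw [h0e]
                exact hDdiff.hasFDerivAt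
              have h := h1.comp_hasDerivAt 0 (hline 0)
              simpa [Function.comp_def, he_def] using h
            have hL : HasDerivAt f'
                (fderiv ℝ (fun y => fderiv ℝ (fun z => u z t₀) y (EuclideanSpace.single i 1)) x₀
                  (EuclideanSpace.single i 1) - c * ((8*b^2 - 4*F₀) * Gα)) 0 := by
              rw [hf'_def]
              have hlin : HasDerivAt (fun s : ℝ => 2*b + 2*s) 2 0 := by
                have h := ((hasDerivAt_id (0:ℝ)).const_mul 2).const_add (2*b)
                exact h.congr_deriv (by ring)
              have hg0 : HasDerivAt (fun s : ℝ => 2*(g t₀ - (‖x₀‖^2 + 2*b*s + s^2)))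
                  (2*(-(2*b + 2*0))) 0 := by
                have h := ((hq' 0).const_sub (g t₀)).const_mul (2:ℝ)
                convert h using 1
              have hprod := (((hg0.mul hlin).mul_const (-Gα)).const_mul c)
              have hh := hu2.sub hprod
              refine hh.congr_deriv ?_
              rw [hF₀_def]
              push_cast; ring
            have hLpos := second_deriv_nonneg_of_isMinOn hηpos hd hmin hL
            have hbb : c * ((8*(x₀ i)^2 - 4*F₀) * Gα) = c * ((8*b^2 - 4*F₀) * Gα) := by
              rw [hb_def]
            rw [hbb]
            linarith [hLpos]
          -- sum up the spatial estimates
          obtain ⟨S, hS_def⟩ : ∃ S : ℝ, S = ∑ i, fderiv ℝ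
              (fun y => fderiv ℝ (fun z => u z t₀) y (EuclideanSpace.single i 1)) x₀
              (EuclideanSpace.single i 1) := ⟨_, rfl⟩
          have hnorm : ‖x₀‖^2 = ∑ j, (x₀ j)^2 := by
            rw [EuclideanSpace.norm_eq, Real.sq_sqrt (by positivity)]
            simp [Real.norm_eq_abs, sq_abs]
          have hsumle : c * ((8*‖x₀‖^2 - 4*N*F₀) * Gα) ≤ S := by
            rw [hS_def]
            refine le_trans (le_of_eq ?_) (Finset.sum_le_sum (fun i (_ : i ∈ Finset.univ) => hspace i))
            rw [Finset.sum_congr rfl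
              (fun i _ => show c * ((8*(x₀ i)^2 - 4*F₀) * Gα)
                = (8*c*Gα)*(x₀ i)^2 - c*(4*F₀*Gα) by ring)]
            rw [Finset.sum_sub_distrib, ← Finset.mul_sum, Finset.sum_const, Finset.card_univ,
              Fintype.card_fin, nsmul_eq_mul, ← hnorm]
            ring
          have hsup := hsuper x₀ hx₀ball t₀ ht₀Ioc
          rw [← hS_def] at hsup
          have hr2eq : ‖x₀‖^2 = g t₀ - F₀ := by rw [hF₀_def]; ring
          have hψeq : c * (2*F₀*a*Gα - α*F₀^2*Gα1*a) - c * ((8*‖x₀‖^2 - 4*N*F₀) * Gα)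
              = c * Gα1 * (2*a*F₀*(g t₀) - a*α*F₀^2 - (8*(g t₀ - F₀) - 4*N*F₀)*(g t₀)) := by
            rw [hGαeq, hr2eq]
            ring
          have hE : 2*a*F₀*(g t₀) - a*α*F₀^2 - (8*(g t₀ - F₀) - 4*N*F₀)*(g t₀) ≤ 0 :=
            E_nonpos hαkey hF₀pos.le hG₀pos.le
          have hfinal : c * Gα1 * (2*a*F₀*(g t₀) - a*α*F₀^2 - (8*(g t₀ - F₀) - 4*N*F₀)*(g t₀)) ≤ 0 :=
            mul_nonpos_of_nonneg_of_nonpos (mul_nonneg hcpos.le hGα1pos.le) hE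
          linarith
    intro p hpK
    have hmp := hp₀min hpK
    have h0 : 0 ≤ v p := le_trans hv0 hmp
    rw [hv_def] at h0
    simp only at h0
    linarith
  -- conclusion
  have hxK : (x, (0:ℝ)) ∈ K := by
    refine hmemK x 0 (by linarith) (by norm_num) le_rfl ?_
    simp only [hg_def]
    have hxx : ‖x‖^2 ≤ 1/4 := by nlinarith [norm_nonneg x]
    nlinarith
  have hfin : Ψ x 0 ≤ u x 0 := by
    apply le_of_forall_pos_le_add
    intro ε hε
    have := main ε hε (x, 0) hxK
    simp only at this
    linarith
  refine le_trans ?_ hfin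
  rw [show δ ^ (2*α-4) = c from hc_def.symm]
  simp only [hΨ_def, hg_def]
  have h1 : (9:ℝ)/16 ≤ 1 := by norm_num
  have hg0 : a * (1 + 0) + δ^2 = 9/16 := by rw [ha_def]; ring
  rw [hg0]
  have h2 : (1:ℝ) ≤ ((9:ℝ)/16) ^ (-α) :=
    Real.one_le_rpow_of_pos_of_le_one_of_nonpos (by norm_num) h1 (by linarith)
  have h3 : (5/16:ℝ)^2 ≤ (9/16 - ‖x‖^2)^2 := by
    have hn : (0:ℝ) ≤ ‖x‖ := norm_nonneg x
    have hxx : ‖x‖^2 ≤ 1/4 := by nlinarith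
    nlinarith [mul_nonneg (by linarith : (0:ℝ) ≤ 1/4 - ‖x‖^2)
      (by linarith : (0:ℝ) ≤ 7/8 - ‖x‖^2)]
  calc (1/2:ℝ)^4 * c = c * ((5/16)^2 * 1) * (256/400) := by ring
    _ ≤ c * ((9/16 - ‖x‖^2)^2 * ((9:ℝ)/16) ^ (-α)) * 1 := by
        apply mul_le_mul _ (by norm_num) (by norm_num) _
        · exact mul_le_mul_of_nonneg_left (mul_le_mul h3 h2 (by norm_num) (by positivity)) hcpos.le
        · positivity
    _ = c * ((9/16 - ‖x‖^2)^2 * ((9:ℝ)/16) ^ (-α)) := by ring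
end
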